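/- The image of the polynomial map f : ℂ² → ℂ³ defined by f(x,y) = (x, y³, x·y) is exactly the set {(X,Y,Z) ∈ ℂ³ : Z³ − X³·Y = 0}. -/

import Mathlib

/-- The image of the polynomial map `f : ℂ² → ℂ³`,
`f(x,y) = (x, y³, x·y)`, is exactly `{(X,Y,Z) ∈ ℂ³ : Z³ − X³·Y = 0}`. -/
theorem stmt10 :
    Set.range (fun p : ℂ × ℂ => ((p.1, p.2 ^ 3, p.1 * p.2) : ℂ × ℂ × ℂ)) =
      {q : ℂ × ℂ × ℂ | q.2.2 ^ 3 - q.1 ^ 3 * q.2.1 = 0} := by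
  ext ⟨X, Y, Z⟩
  simp only [Set.mem_range, Set.mem_setOf_eq, Prod.mk.injEq]
  constructor
  · rintro ⟨⟨x, y⟩, h1, h2, h3⟩
    simp only at h1 h2 h3
    subst h1 h2 h3
    ring
  · intro h
    by_cases hX : X = 0
    · subst hX
      have hZ : Z = 0 := by
        have : Z ^ 3 = 0 := by linear_combination h
        exact pow_eq_zero_iff (by norm_num) |>.mp this
      obtain ⟨y, hy⟩ := IsAlgClosed.exists_pow_nat_eq Y (n := 3) (by norm_num)
      exact ⟨(0, y), by simp [hy, hZ]⟩
    · refine ⟨(X, Z / X), ?_⟩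
      have : (Z / X) ^ 3 = Y := by
        have hZ3 : Z ^ 3 = X ^ 3 * Y := by linear_combination h
        field_simp [div_pow, hZ3]
        exact hZ3
      simp only [this]
      have : X * (Z / X) = Z := by field_simp
      simp [this]
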